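/- For every n ≥ 1, the product F_n F_{n+1} F_{n+2} of three consecutive Fibonacci numbers is a sum of two rational cubes. -/

import Mathlib

theorem stmt_13 (n : ℕ) (hn : 1 ≤ n) :
    ∃ q₁ q₂ : ℚ, (Nat.fib n * Nat.fib (n + 1) * Nat.fib (n + 2) : ℕ) = q₁^3 + q₂^3 := by
  set A : ℚ := (Nat.fib (n+2) : ℚ) with hA
  set B : ℚ := (Nat.fib (n+1) : ℚ) with hB
  have hb : (1:ℚ) ≤ B := by
    have := Nat.fib_pos.mpr (show 0 < n + 1 by omega)
    rw [hB]; exact_mod_cast this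
  have hs : (0:ℚ) < A^2 - A*B + B^2 := by nlinarith [sq_nonneg (A - B), sq_nonneg A]
  have hs' : A^2 - A*B + B^2 ≠ 0 := ne_of_gt hs
  refine ⟨(-A^3 + 6*A^2*B - 3*A*B^2 - B^3) / (3*(A^2 - A*B + B^2)),
          (A^3 + 3*A^2*B - 6*A*B^2 + B^3) / (3*(A^2 - A*B + B^2)), ?_⟩
  have hfn : (Nat.fib n : ℚ) = A - B := by
    rw [hA, hB, Nat.fib_add_two]; push_cast; ring
  push_cast
  rw [hfn, ← hA, ← hB]
  rw [div_pow, div_pow, ← add_div, eq_div_iff (pow_ne_zero 3 (mul_ne_zero three_ne_zero hs'))]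
  ring
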